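/- Let n ≥ 2. Let P_ξ, P_η be diagonal positive definite n×n real matrices, and Q_ξ, Q_η be n×n real matrices with Q_ξ + Q_ξᵀ = E_N − E_0 and Q_η + Q_ηᵀ = E_N − E_0, where E_0 = diag(1,0,…,0), E_N = diag(0,…,0,1); set D_ξ = P_ξ⁻¹·Q_ξ and D_η = P_η⁻¹·Q_η. Let β_v, β_l, k_v, k_l, T_δ, σ_v¹, σ_v², σ_v³, σ_l¹, σ_l², σ_l³ be real constants. Let T_v, T_l : ℝ → ℝⁿ be differentiable, let J_v, J_l : ℝ → (diagonal n×n matrices with nonzero diagonal entries) be differentiable, and let A_v, A_l : ℝ → (diagonal n×n matrices). Suppose that for all τ: (β_v/2)·((J_v·T_v)' + J_v·T_v' + D_ξ·A_v·T_v + A_v·D_ξ·T_v) = k_v·D_ξ·(J_v⁻¹·D_ξ·T_v) + P_ξ⁻¹·(σ_v¹·((T_v)_{n-1} − T_δ)·e_{n-1} + σ_v²·((T_v)_{n-1} − (T_l)_0)·e_{n-1} + σ_v³·D_ξᵀ·(((T_v)_{n-1} − T_δ)·e_{n-1})), and (β_l/2)·((J_l·T_l)' + J_l·T_l' + D_η·A_l·T_l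 + A_l·D_η·T_l) = k_l·D_η·(J_l⁻¹·D_η·T_l) + P_η⁻¹·(σ_l¹·((T_l)_0 − T_δ)·e_0 + σ_l²·((T_l)_0 − (T_v)_{n-1})·e_0 + σ_l³·D_ηᵀ·(((T_l)_0 − T_δ)·e_0)), where e_0, e_{n-1} are the first and last standard basis vectors. Then for all τ: d/dτ( β_v·T_vᵀ·P_ξ·J_v·T_v + β_l·T_lᵀ·P_η·J_l·T_l ) + 2·k_v·(D_ξ·T_v)ᵀ·P_ξ·J_v⁻¹·(D_ξ·T_v) + 2·k_l·(D_η·T_l)ᵀ·P_η·J_l⁻¹·(D_η·T_l) = IT + SAT + BT, where IT = −β_v·(A_v)_{n-1,n-1}·(T_v)_{n-1}² + 2·k_v·(T_v)_{n-1}·(J_v⁻¹·D_ξ·T_v)_{n-1} + β_l·(A_l)_{0,0}·(T_l)_0² − 2·k_l·(T_l)_0·(J_l⁻¹·D_η·T_l)_0, SAT = 2·(σ_v¹·(T_v)_{n-1}·((T_v)_{n-1} − T_δ) + σ_v²·(T_v)_{n-1}·((T_v)_{n-1} − (T_l)_0) + σ_v³·(D_ξ·T_v)_{n-1}·((T_v)_{n-1}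 − T_δ)) + 2·(σ_l¹·(T_l)_0·((T_l)_0 − T_δ) + σ_l²·(T_l)_0·((T_l)_0 − (T_v)_{n-1}) + σ_l³·(D_η·T_l)_0·((T_l)_0 − T_δ)), and BT = β_v·(A_v)_{0,0}·(T_v)_0² − 2·k_v·(T_v)_0·(J_v⁻¹·D_ξ·T_v)_0 − β_l·(A_l)_{n-1,n-1}·(T_l)_{n-1}² + 2·k_l·(T_l)_{n-1}·(J_l⁻¹·D_η·T_l)_{n-1}. -/

import Mathlib

open Matrix

variable {m : ℕ}

lemma diag_dot_swap (d : Fin m → ℝ) (x y : Fin m → ℝ) :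
    (diagonal d *ᵥ x) ⬝ᵥ y = x ⬝ᵥ (diagonal d *ᵥ y) := by
  simp [dotProduct, mulVec_diagonal]; apply Finset.sum_congr rfl; intros; ring

lemma diag_cancel (P : Fin m → ℝ) (hP : ∀ i, P i ≠ 0) (y : Fin m → ℝ) :
    diagonal P *ᵥ ((diagonal fun i => (P i)⁻¹) *ᵥ y) = y := by
  rw [mulVec_mulVec, diagonal_mul_diagonal]
  have : (fun i => P i * (P i)⁻¹) = fun _ => (1:ℝ) := by
    funext i; exact mul_inv_cancel₀ (hP i)
  rw [this]
  simp [diagonal_one]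

lemma dot_stdBasis (a : Fin m) (x z : Fin m → ℝ) :
    x ⬝ᵥ (Matrix.single a a (1:ℝ) *ᵥ z) = x a * z a := by
  simp only [dotProduct, mulVec, Matrix.single]
  rw [Finset.sum_eq_single a]
  · simp [dotProduct, Finset.sum_ite_eq]
  · intro b _ hb
    simp [Matrix.of_apply, Ne.symm hb]
  · simp

lemma dot_SBP (Q : Matrix (Fin m) (Fin m) ℝ) (a b : Fin m)
    (h : Q + Qᵀ = Matrix.single a a 1 - Matrix.single b b 1)
    (x z : Fin m → ℝ) :
    x ⬝ᵥ (Q *ᵥ z) + z ⬝ᵥ (Q *ᵥ x) = x a * z a - x b * z b := by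
  have h2 : z ⬝ᵥ (Q *ᵥ x) = x ⬝ᵥ (Qᵀ *ᵥ z) := by
    rw [mulVec_transpose, dotProduct_mulVec, dotProduct_comm]
  rw [h2, ← dotProduct_add, ← add_mulVec, h, sub_mulVec, dotProduct_sub,
    dot_stdBasis, dot_stdBasis]

lemma phase (P : Fin m → ℝ) (hP : ∀ i, P i ≠ 0)
    (Q D : Matrix (Fin m) (Fin m) ℝ) (hD : D = (diagonal fun i => (P i)⁻¹) * Q)
    (a b : Fin m)
    (hSBP : Q + Qᵀ = Matrix.single a a 1 - Matrix.single b b 1)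
    (β k : ℝ) (T J : ℝ → Fin m → ℝ) (hT : Differentiable ℝ T) (hJ : Differentiable ℝ J)
    (A : Fin m → ℝ) (V : Fin m → ℝ) (τ : ℝ)
    (hs : (β / 2) • (deriv (fun s => diagonal (J s) *ᵥ T s) τ
          + diagonal (J τ) *ᵥ deriv T τ
          + D *ᵥ (diagonal A *ᵥ T τ) + diagonal A *ᵥ (D *ᵥ T τ))
        = k • (D *ᵥ ((diagonal fun i => (J τ i)⁻¹) *ᵥ (D *ᵥ T τ)))
          + (diagonal fun i => (P i)⁻¹) *ᵥ V) :
    HasDerivAt (fun s => β * (T s ⬝ᵥ (diagonal P *ᵥ (diagonal (J s) *ᵥ T s))))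
      (-(β * A a * (T τ a)^2) + β * A b * (T τ b)^2
        + 2*k*(T τ a * ((diagonal fun i => (J τ i)⁻¹) *ᵥ (D *ᵥ T τ)) a)
        - 2*k*(T τ b * ((diagonal fun i => (J τ i)⁻¹) *ᵥ (D *ᵥ T τ)) b)
        + 2 * (T τ ⬝ᵥ V)
        - 2*k*((D *ᵥ T τ) ⬝ᵥ (diagonal P *ᵥ ((diagonal fun i => (J τ i)⁻¹) *ᵥ (D *ᵥ T τ))))) τ := by
  set u : Fin m → ℝ := (diagonal fun i => (J τ i)⁻¹) *ᵥ (D *ᵥ T τ) with hu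
  have hTc : ∀ i, HasDerivAt (fun s => T s i) (deriv T τ i) τ :=
    fun i => hasDerivAt_pi.mp (hT τ).hasDerivAt i
  have hJc : ∀ i, HasDerivAt (fun s => J s i) (deriv J τ i) τ :=
    fun i => hasDerivAt_pi.mp (hJ τ).hasDerivAt i
  have hw : HasDerivAt (fun s => diagonal (J s) *ᵥ T s)
      (fun i => deriv J τ i * T τ i + J τ i * deriv T τ i) τ := by
    rw [hasDerivAt_pi]
    intro i
    simpa [mulVec_diagonal] using (hJc i).fun_mul (hTc i)
  have hw' : deriv (fun s => diagonal (J s) *ᵥ T s) τ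
      = fun i => deriv J τ i * T τ i + J τ i * deriv T τ i := hw.deriv
  set X : Fin m → ℝ := diagonal P *ᵥ T τ with hX
  -- energy derivative
  have hE : HasDerivAt (fun s => β * (T s ⬝ᵥ (diagonal P *ᵥ (diagonal (J s) *ᵥ T s))))
      (β * ∑ i, (deriv T τ i * (P i * (J τ i * T τ i))
        + T τ i * (P i * (deriv J τ i * T τ i + J τ i * deriv T τ i)))) τ := by
    have hfun : (fun s => β * (T s ⬝ᵥ (diagonal P *ᵥ (diagonal (J s) *ᵥ T s))))
        = fun s => β * ∑ i, T s i * (P i * (J s i * T s i)) := by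
      funext s; simp [dotProduct, mulVec_diagonal]
    rw [hfun]
    exact (HasDerivAt.fun_sum (fun i _ =>
      (hTc i).fun_mul (((hJc i).fun_mul (hTc i)).const_mul (P i)))).const_mul β
  -- scalar form of the scheme
  have key := congrArg (fun y => X ⬝ᵥ y) hs
  simp only [dotProduct_smul, dotProduct_add, smul_eq_mul] at key
  -- identities
  have hQmul : ∀ y, Q *ᵥ y = diagonal P *ᵥ (D *ᵥ y) := by
    intro y; rw [hD, ← mulVec_mulVec, diag_cancel P hP]
  have I1 : ∀ y : Fin m → ℝ, X ⬝ᵥ (D *ᵥ y) = T τ ⬝ᵥ (Q *ᵥ y) := by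
    intro y; rw [hX, diag_dot_swap, ← hQmul]
  have e1 : X ⬝ᵥ (D *ᵥ (diagonal A *ᵥ T τ)) + X ⬝ᵥ (diagonal A *ᵥ (D *ᵥ T τ))
      = (A a * T τ a) * T τ a - (A b * T τ b) * T τ b := by
    have h2 : X ⬝ᵥ (diagonal A *ᵥ (D *ᵥ T τ)) = (diagonal A *ᵥ T τ) ⬝ᵥ (Q *ᵥ T τ) := by
      rw [hQmul, hX]
      simp only [dotProduct, mulVec_diagonal]
      apply Finset.sum_congr rfl; intros; ring
    rw [I1, h2, dot_SBP Q a b hSBP]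
    simp [mulVec_diagonal]; ring
  have e2 : X ⬝ᵥ (D *ᵥ u) = (T τ a * u a - T τ b * u b)
      - (D *ᵥ T τ) ⬝ᵥ (diagonal P *ᵥ u) := by
    rw [I1]
    have := dot_SBP Q a b hSBP (T τ) u
    have h3 : u ⬝ᵥ (Q *ᵥ T τ) = (D *ᵥ T τ) ⬝ᵥ (diagonal P *ᵥ u) := by
      rw [hQmul, dotProduct_comm, diag_dot_swap, dotProduct_comm]
    linarith
  have e3 : X ⬝ᵥ ((diagonal fun i => (P i)⁻¹) *ᵥ V) = T τ ⬝ᵥ V := by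
    rw [hX, diag_dot_swap, diag_cancel P hP]
  -- value of derivative
  have hval : β * ∑ i, (deriv T τ i * (P i * (J τ i * T τ i))
        + T τ i * (P i * (deriv J τ i * T τ i + J τ i * deriv T τ i)))
      = β * (X ⬝ᵥ deriv (fun s => diagonal (J s) *ᵥ T s) τ
          + X ⬝ᵥ (diagonal (J τ) *ᵥ deriv T τ)) := by
    rw [hw', hX]
    simp only [dotProduct, mulVec_diagonal, ← Finset.sum_add_distrib, Finset.mul_sum]
    apply Finset.sum_congr rfl; intros; ring
  have hfinal : β * ∑ i, (deriv T τ i * (P i * (J τ i * T τ i))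
        + T τ i * (P i * (deriv J τ i * T τ i + J τ i * deriv T τ i)))
      = -(β * A a * (T τ a)^2) + β * A b * (T τ b)^2
        + 2*k*(T τ a * u a) - 2*k*(T τ b * u b)
        + 2 * (T τ ⬝ᵥ V)
        - 2*k*((D *ᵥ T τ) ⬝ᵥ (diagonal P *ᵥ u)) := by
    rw [hval]
    linear_combination 2 * key - β * e1 + 2 * k * e2 + 2 * e3
  exact hfinal ▸ hE


/-- Semi-discrete energy rate identity (4.3)–(4.5) for the SBP–SAT
discretization of the transformed two-phase evaporation model.  The grids have
n+2 ≥ 2 nodes indexed by `Fin (n+2)`; the interface is the last node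
(`Fin.last (n+1)`) of the vapor grid and the first node (`0`) of the liquid
grid.  The diagonal matrices P_ξ, P_η, J_v, J_l, A_v, A_l are represented by
their diagonal entries; D_ξ = P_ξ⁻¹ Q_ξ, D_η = P_η⁻¹ Q_η; Q_ξ, Q_η satisfy the
SBP property Q + Qᵀ = E_N − E_0. -/

theorem stmt_19 (n : ℕ)
    (Pξ Pη : Fin (n + 2) → ℝ) (hPξ : ∀ i, 0 < Pξ i) (hPη : ∀ i, 0 < Pη i)
    (Qξ Qη : Matrix (Fin (n + 2)) (Fin (n + 2)) ℝ)
    (hSBPξ : Qξ + Qξᵀ = Matrix.single (Fin.last (n + 1)) (Fin.last (n + 1)) 1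
        - Matrix.single 0 0 1)
    (hSBPη : Qη + Qηᵀ = Matrix.single (Fin.last (n + 1)) (Fin.last (n + 1)) 1
        - Matrix.single 0 0 1)
    (Dξ Dη : Matrix (Fin (n + 2)) (Fin (n + 2)) ℝ)
    (hDξ : Dξ = (Matrix.diagonal fun i => (Pξ i)⁻¹) * Qξ)
    (hDη : Dη = (Matrix.diagonal fun i => (Pη i)⁻¹) * Qη)
    (βv βl kv kl Tδ σv1 σv2 σv3 σl1 σl2 σl3 : ℝ)
    (Tv Tl : ℝ → Fin (n + 2) → ℝ) (hTv : Differentiable ℝ Tv) (hTl : Differentiable ℝ Tl)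
    (Jv Jl : ℝ → Fin (n + 2) → ℝ) (hJv : Differentiable ℝ Jv) (hJl : Differentiable ℝ Jl)
    (hJvne : ∀ τ i, Jv τ i ≠ 0) (hJlne : ∀ τ i, Jl τ i ≠ 0)
    (Av Al : ℝ → Fin (n + 2) → ℝ)
    (hschemev : ∀ τ : ℝ,
      (βv / 2) • (deriv (fun s => Matrix.diagonal (Jv s) *ᵥ Tv s) τ
          + Matrix.diagonal (Jv τ) *ᵥ deriv Tv τ
          + Dξ *ᵥ (Matrix.diagonal (Av τ) *ᵥ Tv τ)
          + Matrix.diagonal (Av τ) *ᵥ (Dξ *ᵥ Tv τ))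
        = kv • (Dξ *ᵥ ((Matrix.diagonal fun i => (Jv τ i)⁻¹) *ᵥ (Dξ *ᵥ Tv τ)))
          + (Matrix.diagonal fun i => (Pξ i)⁻¹) *ᵥ
            (σv1 • ((Tv τ (Fin.last (n + 1)) - Tδ) • (Pi.single (Fin.last (n + 1)) 1 : Fin (n + 2) → ℝ))
              + σv2 • ((Tv τ (Fin.last (n + 1)) - Tl τ 0) • (Pi.single (Fin.last (n + 1)) 1 : Fin (n + 2) → ℝ))
              + σv3 • (Dξᵀ *ᵥ ((Tv τ (Fin.last (n + 1)) - Tδ) • (Pi.single (Fin.last (n + 1)) 1 : Fin (n + 2) → ℝ)))))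
    (hschemel : ∀ τ : ℝ,
      (βl / 2) • (deriv (fun s => Matrix.diagonal (Jl s) *ᵥ Tl s) τ
          + Matrix.diagonal (Jl τ) *ᵥ deriv Tl τ
          + Dη *ᵥ (Matrix.diagonal (Al τ) *ᵥ Tl τ)
          + Matrix.diagonal (Al τ) *ᵥ (Dη *ᵥ Tl τ))
        = kl • (Dη *ᵥ ((Matrix.diagonal fun i => (Jl τ i)⁻¹) *ᵥ (Dη *ᵥ Tl τ)))
          + (Matrix.diagonal fun i => (Pη i)⁻¹) *ᵥ
            (σl1 • ((Tl τ 0 - Tδ) • (Pi.single 0 1 : Fin (n + 2) → ℝ))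
              + σl2 • ((Tl τ 0 - Tv τ (Fin.last (n + 1))) • (Pi.single 0 1 : Fin (n + 2) → ℝ))
              + σl3 • (Dηᵀ *ᵥ ((Tl τ 0 - Tδ) • (Pi.single 0 1 : Fin (n + 2) → ℝ))))) :
    ∀ τ : ℝ,
      deriv (fun s => βv * (Tv s ⬝ᵥ (Matrix.diagonal Pξ *ᵥ (Matrix.diagonal (Jv s) *ᵥ Tv s)))
          + βl * (Tl s ⬝ᵥ (Matrix.diagonal Pη *ᵥ (Matrix.diagonal (Jl s) *ᵥ Tl s)))) τ
        + 2 * kv * ((Dξ *ᵥ Tv τ) ⬝ᵥ (Matrix.diagonal Pξ *ᵥ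
            ((Matrix.diagonal fun i => (Jv τ i)⁻¹) *ᵥ (Dξ *ᵥ Tv τ))))
        + 2 * kl * ((Dη *ᵥ Tl τ) ⬝ᵥ (Matrix.diagonal Pη *ᵥ
            ((Matrix.diagonal fun i => (Jl τ i)⁻¹) *ᵥ (Dη *ᵥ Tl τ))))
      = (-βv * Av τ (Fin.last (n + 1)) * (Tv τ (Fin.last (n + 1))) ^ 2
          + 2 * kv * Tv τ (Fin.last (n + 1))
            * (((Matrix.diagonal fun i => (Jv τ i)⁻¹) *ᵥ (Dξ *ᵥ Tv τ)) (Fin.last (n + 1)))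
          + βl * Al τ 0 * (Tl τ 0) ^ 2
          - 2 * kl * Tl τ 0 * (((Matrix.diagonal fun i => (Jl τ i)⁻¹) *ᵥ (Dη *ᵥ Tl τ)) 0))
        + (2 * (σv1 * Tv τ (Fin.last (n + 1)) * (Tv τ (Fin.last (n + 1)) - Tδ)
              + σv2 * Tv τ (Fin.last (n + 1)) * (Tv τ (Fin.last (n + 1)) - Tl τ 0)
              + σv3 * ((Dξ *ᵥ Tv τ) (Fin.last (n + 1))) * (Tv τ (Fin.last (n + 1)) - Tδ))
          + 2 * (σl1 * Tl τ 0 * (Tl τ 0 - Tδ)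
              + σl2 * Tl τ 0 * (Tl τ 0 - Tv τ (Fin.last (n + 1)))
              + σl3 * ((Dη *ᵥ Tl τ) 0) * (Tl τ 0 - Tδ)))
        + (βv * Av τ 0 * (Tv τ 0) ^ 2
          - 2 * kv * Tv τ 0 * (((Matrix.diagonal fun i => (Jv τ i)⁻¹) *ᵥ (Dξ *ᵥ Tv τ)) 0)
          - βl * Al τ (Fin.last (n + 1)) * (Tl τ (Fin.last (n + 1))) ^ 2
          + 2 * kl * Tl τ (Fin.last (n + 1))
            * (((Matrix.diagonal fun i => (Jl τ i)⁻¹) *ᵥ (Dη *ᵥ Tl τ)) (Fin.last (n + 1)))) := by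
  intro τ
  have hv := phase Pξ (fun i => (hPξ i).ne') Qξ Dξ hDξ (Fin.last (n+1)) 0 hSBPξ βv kv
    Tv Jv hTv hJv (Av τ)
    (σv1 • ((Tv τ (Fin.last (n + 1)) - Tδ) • (Pi.single (Fin.last (n + 1)) 1 : Fin (n + 2) → ℝ))
      + σv2 • ((Tv τ (Fin.last (n + 1)) - Tl τ 0) • (Pi.single (Fin.last (n + 1)) 1 : Fin (n + 2) → ℝ))
      + σv3 • (Dξᵀ *ᵥ ((Tv τ (Fin.last (n + 1)) - Tδ) • (Pi.single (Fin.last (n + 1)) 1 : Fin (n + 2) → ℝ))))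
    τ (hschemev τ)
  have hl := phase Pη (fun i => (hPη i).ne') Qη Dη hDη (Fin.last (n+1)) 0 hSBPη βl kl
    Tl Jl hTl hJl (Al τ)
    (σl1 • ((Tl τ 0 - Tδ) • (Pi.single 0 1 : Fin (n + 2) → ℝ))
      + σl2 • ((Tl τ 0 - Tv τ (Fin.last (n + 1))) • (Pi.single 0 1 : Fin (n + 2) → ℝ))
      + σl3 • (Dηᵀ *ᵥ ((Tl τ 0 - Tδ) • (Pi.single 0 1 : Fin (n + 2) → ℝ))))
    τ (hschemel τ)
  have hd := (hv.fun_add hl).deriv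
  have hVv : Tv τ ⬝ᵥ
      (σv1 • ((Tv τ (Fin.last (n + 1)) - Tδ) • (Pi.single (Fin.last (n + 1)) 1 : Fin (n + 2) → ℝ))
        + σv2 • ((Tv τ (Fin.last (n + 1)) - Tl τ 0) • (Pi.single (Fin.last (n + 1)) 1 : Fin (n + 2) → ℝ))
        + σv3 • (Dξᵀ *ᵥ ((Tv τ (Fin.last (n + 1)) - Tδ) • (Pi.single (Fin.last (n + 1)) 1 : Fin (n + 2) → ℝ))))
      = σv1 * ((Tv τ (Fin.last (n + 1)) - Tδ) * Tv τ (Fin.last (n + 1)))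
        + σv2 * ((Tv τ (Fin.last (n + 1)) - Tl τ 0) * Tv τ (Fin.last (n + 1)))
        + σv3 * ((Tv τ (Fin.last (n + 1)) - Tδ) * (Dξ *ᵥ Tv τ) (Fin.last (n + 1))) := by
    have ht : Tv τ ⬝ᵥ (Dξᵀ *ᵥ ((Tv τ (Fin.last (n + 1)) - Tδ) • (Pi.single (Fin.last (n + 1)) 1 : Fin (n + 2) → ℝ)))
        = (Tv τ (Fin.last (n + 1)) - Tδ) * (Dξ *ᵥ Tv τ) (Fin.last (n + 1)) := by
      rw [dotProduct_mulVec, vecMul_transpose, dotProduct_smul, smul_eq_mul,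
        dotProduct_single, mul_one]
    rw [dotProduct_add, dotProduct_add, dotProduct_smul, dotProduct_smul, dotProduct_smul,
      dotProduct_smul, dotProduct_smul, ht, smul_eq_mul, smul_eq_mul, smul_eq_mul,
      smul_eq_mul, smul_eq_mul, dotProduct_single]
    ring
  have hVl : Tl τ ⬝ᵥ
      (σl1 • ((Tl τ 0 - Tδ) • (Pi.single 0 1 : Fin (n + 2) → ℝ))
        + σl2 • ((Tl τ 0 - Tv τ (Fin.last (n + 1))) • (Pi.single 0 1 : Fin (n + 2) → ℝ))
        + σl3 • (Dηᵀ *ᵥ ((Tl τ 0 - Tδ) • (Pi.single 0 1 : Fin (n + 2) → ℝ))))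
      = σl1 * ((Tl τ 0 - Tδ) * Tl τ 0)
        + σl2 * ((Tl τ 0 - Tv τ (Fin.last (n + 1))) * Tl τ 0)
        + σl3 * ((Tl τ 0 - Tδ) * (Dη *ᵥ Tl τ) 0) := by
    have ht : Tl τ ⬝ᵥ (Dηᵀ *ᵥ ((Tl τ 0 - Tδ) • (Pi.single 0 1 : Fin (n + 2) → ℝ)))
        = (Tl τ 0 - Tδ) * (Dη *ᵥ Tl τ) 0 := by
      rw [dotProduct_mulVec, vecMul_transpose, dotProduct_smul, smul_eq_mul,
        dotProduct_single, mul_one]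
    rw [dotProduct_add, dotProduct_add, dotProduct_smul, dotProduct_smul, dotProduct_smul,
      dotProduct_smul, dotProduct_smul, ht, smul_eq_mul, smul_eq_mul, smul_eq_mul,
      smul_eq_mul, smul_eq_mul, dotProduct_single]
    ring
  rw [hd, hVv, hVl]
  ring
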